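/- The function ε(Q) = f(√T·(ln(1+Q) - R·ln 2)/√(1 - 1/(1+Q)²)), where f is the Gaussian Q-function and T > 0, R > 0, is strictly decreasing in Q on (0, ∞). -/

import Mathlib

/-- The Gaussian Q-function. -/
noncomputable def gaussQ (x : ℝ) : ℝ :=
  ∫ t in Set.Ioi x, Real.exp (-t ^ 2 / 2) / Real.sqrt (2 * Real.pi)

lemma gauss_integrable :
    MeasureTheory.Integrable (fun t : ℝ => Real.exp (-t ^ 2 / 2) / Real.sqrt (2 * Real.pi)) := by
  have h := (integrable_exp_neg_mul_sq (by norm_num : (0:ℝ) < 1/2)).div_const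
      (Real.sqrt (2 * Real.pi))
  have he : (fun t : ℝ => Real.exp (-t ^ 2 / 2) / Real.sqrt (2 * Real.pi))
      = fun t : ℝ => Real.exp (-(1/2) * t ^ 2) / Real.sqrt (2 * Real.pi) := by
    funext t
    rw [show -t ^ 2 / 2 = -(1/2) * t ^ 2 by ring]
  rw [he]
  exact h

lemma gaussQ_strictAnti : StrictAnti gaussQ := by
  intro x y hxy
  have hint := gauss_integrable
  have hpos : ∀ t : ℝ, 0 < Real.exp (-t ^ 2 / 2) / Real.sqrt (2 * Real.pi) := fun t =>
    div_pos (Real.exp_pos _) (Real.sqrt_pos.mpr (by positivity))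
  have hsplit : gaussQ x = (∫ t in Set.Ioc x y,
      Real.exp (-t ^ 2 / 2) / Real.sqrt (2 * Real.pi)) + gaussQ y := by
    unfold gaussQ
    rw [← MeasureTheory.setIntegral_union (Set.Ioc_disjoint_Ioi le_rfl) measurableSet_Ioi
        hint.integrableOn hint.integrableOn, Set.Ioc_union_Ioi_eq_Ioi hxy.le]
  have hIoc : 0 < ∫ t in Set.Ioc x y, Real.exp (-t ^ 2 / 2) / Real.sqrt (2 * Real.pi) := by
    rw [← intervalIntegral.integral_of_le hxy.le]
    exact intervalIntegral.intervalIntegral_pos_of_pos hint.intervalIntegrable hpos hxy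
  linarith

lemma inner_strictMono (T R : ℝ) (hT : 0 < T) (hR : 0 < R) :
    StrictMonoOn (fun Q : ℝ =>
        Real.sqrt T * (Real.log (1 + Q) - R * Real.log 2) /
          Real.sqrt (1 - 1 / (1 + Q) ^ 2)) (Set.Ioi 0) := by
  have key : ∀ Q ∈ Set.Ioi (0:ℝ), ∃ V : ℝ, 0 < V ∧
      HasDerivAt (fun Q : ℝ =>
        Real.sqrt T * (Real.log (1 + Q) - R * Real.log 2) /
          Real.sqrt (1 - 1 / (1 + Q) ^ 2)) V Q := by
    intro Q hQ
    have hQ0 : (0:ℝ) < Q := hQ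
    have hu : (1:ℝ) < 1 + Q := by linarith
    have hu0 : (0:ℝ) < 1 + Q := by linarith
    have hune : (1 + Q) ≠ 0 := ne_of_gt hu0
    have hg : (0:ℝ) < 1 - 1 / (1 + Q) ^ 2 := by
      have h1 : (1:ℝ) < (1 + Q) ^ 2 := by nlinarith
      have : 1 / (1 + Q) ^ 2 < 1 := by
        rw [div_lt_one (by positivity)]; exact h1
      linarith
    set s := Real.sqrt (1 - 1 / (1 + Q) ^ 2) with hs
    have hspos : 0 < s := Real.sqrt_pos.mpr hg
    have hssq : s ^ 2 = 1 - 1 / (1 + Q) ^ 2 := Real.sq_sqrt hg.le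
    -- derivatives
    have h1 : HasDerivAt (fun Q : ℝ => 1 + Q) 1 Q := by
      simpa using (hasDerivAt_id Q).const_add 1
    have hlog : HasDerivAt (fun Q : ℝ => Real.log (1 + Q)) (1 / (1 + Q)) Q :=
      h1.log hune
    have hN : HasDerivAt (fun Q : ℝ => Real.log (1 + Q) - R * Real.log 2)
        (1 / (1 + Q)) Q := hlog.sub_const _
    have hnum : HasDerivAt (fun Q : ℝ => Real.sqrt T * (Real.log (1 + Q) - R * Real.log 2))
        (Real.sqrt T * (1 / (1 + Q))) Q := hN.const_mul _
    have hsq : HasDerivAt (fun Q : ℝ => (1 + Q) ^ 2) (2 * (1 + Q)) Q := by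
      have := h1.fun_pow 2
      simpa using this
    have hsqne : ((1 + Q) ^ 2 : ℝ) ≠ 0 := by positivity
    have hinv : HasDerivAt (fun Q : ℝ => ((1 + Q) ^ 2)⁻¹)
        (-(2 * (1 + Q)) / ((1 + Q) ^ 2) ^ 2) Q := hsq.inv hsqne
    have hgd : HasDerivAt (fun Q : ℝ => 1 - 1 / (1 + Q) ^ 2)
        (2 * (1 + Q) / ((1 + Q) ^ 2) ^ 2) Q := by
      have := hinv.const_sub 1
      have heq : (fun Q : ℝ => 1 - ((1 + Q) ^ 2)⁻¹) = fun Q : ℝ => 1 - 1 / (1 + Q) ^ 2 := by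
        funext t; rw [one_div]
      rw [heq] at this
      rw [show (2 * (1 + Q) / ((1 + Q) ^ 2) ^ 2 : ℝ) = -(-(2 * (1 + Q)) / ((1 + Q) ^ 2) ^ 2) by ring]
      exact this
    have hgne : (1 - 1 / (1 + Q) ^ 2 : ℝ) ≠ 0 := ne_of_gt hg
    have hD : HasDerivAt (fun Q : ℝ => Real.sqrt (1 - 1 / (1 + Q) ^ 2))
        ((2 * (1 + Q) / ((1 + Q) ^ 2) ^ 2) / (2 * s)) Q := hgd.sqrt hgne
    have hDne : s ≠ 0 := ne_of_gt hspos
    have hf := hnum.div hD hDne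
    refine ⟨_, ?_, hf⟩
    -- positivity of the derivative value
    have hTpos : 0 < Real.sqrt T := Real.sqrt_pos.mpr hT
    have hNlt : Real.log (1 + Q) - R * Real.log 2 < (1 + Q) ^ 2 * s ^ 2 := by
      have hlog2 : 0 < Real.log 2 := Real.log_pos (by norm_num)
      have h1 : Real.log (1 + Q) ≤ Q := by
        have := Real.log_le_sub_one_of_pos hu0
        linarith
      have h2 : (1 + Q) ^ 2 * s ^ 2 = (1 + Q) ^ 2 - 1 := by
        rw [hssq]; field_simp
      rw [h2]
      nlinarith [mul_pos hR hlog2]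
    have hnumer : 0 < Real.sqrt T * (1 / (1 + Q)) * s -
        Real.sqrt T * (Real.log (1 + Q) - R * Real.log 2) *
          ((2 * (1 + Q) / ((1 + Q) ^ 2) ^ 2) / (2 * s)) := by
      have heq : Real.sqrt T * (1 / (1 + Q)) * s -
          Real.sqrt T * (Real.log (1 + Q) - R * Real.log 2) *
            ((2 * (1 + Q) / ((1 + Q) ^ 2) ^ 2) / (2 * s)) =
          Real.sqrt T * ((1 + Q) ^ 2 * s ^ 2 - (Real.log (1 + Q) - R * Real.log 2)) /
            ((1 + Q) ^ 3 * s) := by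
        field_simp
      rw [heq]
      apply div_pos
      · exact mul_pos hTpos (by linarith)
      · positivity
    exact div_pos hnumer (by positivity)
  apply strictMonoOn_of_deriv_pos (convex_Ioi 0)
  · intro Q hQ
    obtain ⟨V, _, hV⟩ := key Q hQ
    exact hV.continuousAt.continuousWithinAt
  · intro Q hQ
    rw [interior_Ioi] at hQ
    obtain ⟨V, hVpos, hV⟩ := key Q hQ
    rw [hV.deriv]
    exact hVpos

theorem eps_strictAnti (T R : ℝ) (hT : 0 < T) (hR : 0 < R) :
    StrictAntiOn (fun Q : ℝ =>
        gaussQ (Real.sqrt T * (Real.log (1 + Q) - R * Real.log 2) /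
          Real.sqrt (1 - 1 / (1 + Q) ^ 2))) (Set.Ioi 0) := by
  intro a ha b hb hab
  exact gaussQ_strictAnti (inner_strictMono T R hT hR ha hb hab)
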